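/- arXiv:1407.6973 — 2 statements merged into one kernel-verified Lean document; each statement's English description precedes it below -/
import Mathlib

section
/- Let α, β, N be real numbers and, for each integer j ≥ 0, define Z_j(s) = h_j^{−α,−β,−2−N}(−s−1). Then for every real s and every integer j ≥ 0: (s+1)(β+N−s) Z_j(s+1) + ((s+α+1)(s−N) + s(s−β−N−1)) Z_j(s) + (N+1−s)(α+s) Z_j(s−1) = (j+1)(α+β−j) Z_j(s). (This is the recurrence (relaR) for the dual Hahn recurrence coefficients a_n = n(n+α), b_n = −(n+α+1)(n−N) − n(n−β−N−1), c_n = (n−β−N−1)(n−N−1), with ε_n = (β+N−n+1)/(α+n) and eigenvalue −λ^{α,β}(−j−1), where λ^{α,β}(x) = x(x+α+β+1); the coefficients have been cleared of denominators, using ε_{n+1} a_{n+1} = (n+1)(β+N−n) and c_n/ε_n = (N+1−n)(α+n).) -/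
open Polynomial Finset

noncomputable section

/-- Pochhammer symbol `(a)_k = a(a+1)⋯(a+k−1)`. -/
def poch (a : ℝ) (k : ℕ) : ℝ := ∏ i ∈ Finset.range k, (a + i)

/-- The quadratic lattice `λ^{α,β}(x) = x(x+α+β+1)`. -/
def lam (α β x : ℝ) : ℝ := x * (x + α + β + 1)

/-- The dual Hahn polynomial `R_n^{α,β,N}`. -/
def dualHahn (α β N : ℝ) (n : ℕ) : Polynomial ℝ :=
  Polynomial.C ((n.factorial : ℝ))⁻¹ *
    ∑ j ∈ Finset.range (n + 1),
      Polynomial.C ((-1 : ℝ) ^ j * poch (-(n : ℝ)) j * poch (-N + j) (n - j)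
          / (poch (α + 1) j * (j.factorial : ℝ))) *
        ∏ i ∈ Finset.range j, (Polynomial.X - Polynomial.C ((i : ℝ) * (α + β + 1 + i)))

/-- Dual Hahn polynomial with integer index; `R_k = 0` for `k < 0`. -/
def dualHahnZ (α β N : ℝ) (k : ℤ) : Polynomial ℝ :=
  if 0 ≤ k then dualHahn α β N k.toNat else 0

/-- The Hahn polynomial `h_n^{α,β,N}` evaluated at `x`. -/
def hahn (α β N : ℝ) (n : ℕ) (x : ℝ) : ℝ :=
  ∑ j ∈ Finset.range (n + 1),
    poch (-(n : ℝ)) j * poch ((n : ℝ) + α + β + 1) j * poch (-N + j) (n - j) *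
      poch (α + j + 1) (n - j) * poch (-x) j / (j.factorial : ℝ)

/-- The dual Hahn weight `w_{*;α,β,N}(x)`. -/
def dualHahnWeight (α β : ℝ) (N : ℕ) (x : ℕ) : ℝ :=
  (2 * (x : ℝ) + α + β + 1) * poch (α + 1) x * poch (-(N : ℝ)) x * (N.factorial : ℝ) /
    ((-1 : ℝ) ^ x * poch ((x : ℝ) + α + β + 1) (N + 1) * poch (β + 1) x * (x.factorial : ℝ))

lemma poch_zero (a : ℝ) : poch a 0 = 1 := by simp [poch]

lemma poch_succ (a : ℝ) (k : ℕ) : poch a (k + 1) = poch a k * (a + k) := by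
  simp [poch, Finset.prod_range_succ]

lemma poch_succ' (a : ℝ) (k : ℕ) : poch a (k + 1) = a * poch (a + 1) k := by
  rw [poch, Finset.prod_range_succ', poch, mul_comm]
  congr 1
  · simp
  · apply Finset.prod_congr rfl
    intro i _
    push_cast
    ring

/-- The coefficient of `poch u k` in the Hahn sum with parameters `(-α,-β,-2-N)`. -/
def hahnC (α β N : ℝ) (j k : ℕ) : ℝ :=
  poch (-(j : ℝ)) k * poch ((j : ℝ) + -α + -β + 1) k * poch (-(-2 - N) + (k : ℝ)) (j - k) *
    poch (-α + (k : ℝ) + 1) (j - k) / (k.factorial : ℝ)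

/-- The telescoping term. -/
def hahnD (α β N : ℝ) (j : ℕ) (s : ℝ) (k : ℕ) : ℝ :=
  hahnC α β N j k * (((k : ℝ) - (j : ℝ)) * (α + β - (k : ℝ) - (j : ℝ) - 1)) * poch (s + 1) k

/-- The shifted telescoping term. -/
def hahnDsh (α β N : ℝ) (j : ℕ) (s : ℝ) : ℕ → ℝ
  | 0 => 0
  | (m + 1) => hahnD α β N j s m

lemma hahnC_succ (α β N : ℝ) (j m : ℕ) (hm : m < j) :
    hahnC α β N j (m + 1) * (((m : ℝ) + 1) * ((-(-2 - N) + (m : ℝ)) * (-α + (m : ℝ) + 1))) =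
    hahnC α β N j m * ((-(j : ℝ) + (m : ℝ)) * ((j : ℝ) + -α + -β + 1 + (m : ℝ))) := by
  have hf : (m.factorial : ℝ) ≠ 0 := Nat.cast_ne_zero.mpr m.factorial_ne_zero
  have hm1 : ((m : ℝ) + 1) ≠ 0 := by positivity
  unfold hahnC
  have h1 : j - m = (j - (m + 1)) + 1 := by omega
  rw [h1, poch_succ' (-(-2 - N) + (m : ℝ)), poch_succ' (-α + (m : ℝ) + 1),
      poch_succ (-(j : ℝ)) m, poch_succ ((j : ℝ) + -α + -β + 1) m, Nat.factorial_succ]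
  have b3 : (-(-2 - N) + ((m + 1 : ℕ) : ℝ)) = (-(-2 - N) + (m : ℝ) + 1) := by push_cast; ring
  have b4 : (-α + ((m + 1 : ℕ) : ℝ) + 1) = (-α + (m : ℝ) + 1 + 1) := by push_cast; ring
  rw [b3, b4]
  push_cast
  field_simp

/-- The Hahn polynomials `Z_j(s) = h_j^{−α,−β,−2−N}(−s−1)` satisfy the recurrence (relaR)
for the dual Hahn recurrence coefficients with `ε_n = (β+N−n+1)/(α+n)` and eigenvalue
`−λ^{α,β}(−j−1)`, with denominators cleared. -/
theorem hahn_rec_two (α β N : ℝ) (j : ℕ) (s : ℝ) :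
    (s + 1) * (β + N - s) * hahn (-α) (-β) (-2 - N) j (-(s + 1) - 1) +
      ((s + α + 1) * (s - N) + s * (s - β - N - 1)) * hahn (-α) (-β) (-2 - N) j (-s - 1) +
      (N + 1 - s) * (α + s) * hahn (-α) (-β) (-2 - N) j (-(s - 1) - 1) =
    (j + 1) * (α + β - j) * hahn (-α) (-β) (-2 - N) j (-s - 1) := by
  have e1 : (-(-(s + 1) - 1) : ℝ) = s + 1 + 1 := by ring
  have e2 : (-(-s - 1) : ℝ) = s + 1 := by ring
  have e3 : (-(-(s - 1) - 1) : ℝ) = s := by ring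
  have hsum : ∀ u : ℝ,
      (∑ k ∈ Finset.range (j + 1),
        poch (-(j : ℝ)) k * poch ((j : ℝ) + -α + -β + 1) k * poch (-(-2 - N) + (k : ℝ)) (j - k) *
          poch (-α + (k : ℝ) + 1) (j - k) * poch u k / (k.factorial : ℝ)) =
      ∑ k ∈ Finset.range (j + 1), hahnC α β N j k * poch u k := by
    intro u
    refine Finset.sum_congr rfl fun k _ => ?_
    simp only [hahnC]
    ring
  simp only [hahn, e1, e2, e3]
  rw [hsum (s + 1 + 1), hsum (s + 1), hsum s]
  rw [Finset.mul_sum, Finset.mul_sum, Finset.mul_sum, Finset.mul_sum]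
  have first : (∑ k ∈ Finset.range (j + 1),
        (s + 1) * (β + N - s) * (hahnC α β N j k * poch (s + 1 + 1) k)) =
      ∑ k ∈ Finset.range (j + 1), (β + N - s) * (hahnC α β N j k * poch (s + 1) (k + 1)) := by
    refine Finset.sum_congr rfl fun k _ => ?_
    rw [poch_succ' (s + 1) k]
    ring
  rw [first]
  rw [← sub_eq_zero, ← Finset.sum_add_distrib, ← Finset.sum_add_distrib,
    ← Finset.sum_sub_distrib]
  have tel : (∑ k ∈ Finset.range (j + 1),
      (hahnD α β N j s k - hahnDsh α β N j s k)) = 0 := by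
    rw [Finset.sum_sub_distrib, Finset.sum_range_succ, Finset.sum_range_succ']
    have hDj : hahnD α β N j s j = 0 := by simp [hahnD]
    simp [hDj, hahnDsh]
  rw [← tel]
  refine Finset.sum_congr rfl fun k hk => ?_
  simp only [Finset.mem_range] at hk
  cases k with
  | zero =>
    simp only [hahnDsh, hahnD, poch_zero, zero_add, poch_succ, Nat.cast_zero]
    ring
  | succ m =>
    have hC := hahnC_succ α β N j m (by omega)
    simp only [hahnDsh, hahnD]
    rw [poch_succ' s m, poch_succ (s + 1) (m + 1), poch_succ (s + 1) m]
    push_cast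
    linear_combination poch (s + 1) m * hC

end
end

section
/- Let α, β, N be real numbers with α ∉ {−1,−2,−3,…}. Then for every integer n ≥ 1 and every real x: R_n^{α,β,N}(λ^{α,β}(x+1)) − R_n^{α,β,N}(λ^{α,β}(x)) = ((2x+α+β+2)/(α+1)) · R_{n−1}^{α+1,β,N−1}(λ^{α+1,β}(x)), where λ^{α,β}(x) = x(x+α+β+1) and λ^{α+1,β}(x) = x(x+α+β+2). -/
open Polynomial Finset

noncomputable section

lemma poch_succ_left (a : ℝ) (k : ℕ) : poch a (k+1) = a * poch (a+1) k := by
  unfold poch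
  rw [Finset.prod_range_succ']
  simp only [Nat.cast_zero, add_zero]
  rw [mul_comm]
  congr 1
  exact Finset.prod_congr rfl fun i _ => by push_cast; ring

lemma poch_ne_zero {a : ℝ} (h : ∀ i : ℕ, a + (i:ℝ) ≠ 0) (k : ℕ) : poch a k ≠ 0 :=
  Finset.prod_ne_zero_iff.mpr fun i _ => h i

lemma prod_diff (α β x : ℝ) (j : ℕ) :
    (∏ i ∈ Finset.range (j+1), (lam α β (x+1) - (i:ℝ) * (α+β+1+i))) -
      ∏ i ∈ Finset.range (j+1), (lam α β x - (i:ℝ) * (α+β+1+i)) =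
    ((j:ℝ)+1) * (2*x+α+β+2) *
      ∏ i ∈ Finset.range j, (lam (α+1) β x - (i:ℝ) * (α+1+β+1+i)) := by
  have h1 : ∀ i ∈ Finset.range (j+1), lam α β (x+1) - (i:ℝ)*(α+β+1+i)
      = (x+1-i) * (x+α+β+2+i) := fun i _ => by simp only [lam]; ring
  have h2 : ∀ i ∈ Finset.range (j+1), lam α β x - (i:ℝ)*(α+β+1+i)
      = (x-i) * (x+α+β+1+i) := fun i _ => by simp only [lam]; ring
  have h3 : ∀ i ∈ Finset.range j, lam (α+1) β x - (i:ℝ)*(α+1+β+1+i)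
      = (x-i) * (x+α+β+2+i) := fun i _ => by simp only [lam]; ring
  rw [Finset.prod_congr rfl h1, Finset.prod_congr rfl h2, Finset.prod_congr rfl h3,
    Finset.prod_mul_distrib, Finset.prod_mul_distrib, Finset.prod_mul_distrib,
    Finset.prod_range_succ' (fun i => x+1-(i:ℝ)),
    Finset.prod_range_succ (fun i => x+α+β+2+(i:ℝ)),
    Finset.prod_range_succ (fun i => x-(i:ℝ)),
    Finset.prod_range_succ' (fun i => x+α+β+1+(i:ℝ))]
  have e1 : ∏ i ∈ Finset.range j, (x+1-((i+1:ℕ):ℝ)) = ∏ i ∈ Finset.range j, (x - (i:ℝ)) :=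
    Finset.prod_congr rfl fun i _ => by push_cast; ring
  have e2 : ∏ i ∈ Finset.range j, (x+α+β+1+((i+1:ℕ):ℝ)) = ∏ i ∈ Finset.range j, (x+α+β+2+(i:ℝ)) :=
    Finset.prod_congr rfl fun i _ => by push_cast; ring
  rw [e1, e2]
  push_cast
  ring

/-- Forward shift identity for dual Hahn polynomials:
`Δ_x R_n^{α,β,N}(λ(x)) = ((2x+α+β+2)/(α+1)) R_{n−1}^{α+1,β,N−1}(λ^{α+1,β}(x))`. -/
theorem dualHahn_forward_shift (α β N : ℝ) (hα : ∀ k : ℕ, α ≠ -1 - k)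
    (n : ℕ) (hn : 1 ≤ n) (x : ℝ) :
    (dualHahn α β N n).eval (lam α β (x + 1)) - (dualHahn α β N n).eval (lam α β x) =
    ((2 * x + α + β + 2) / (α + 1)) *
      (dualHahn (α + 1) β (N - 1) (n - 1)).eval (lam (α + 1) β x) := by
  obtain ⟨m, rfl⟩ : ∃ m, n = m + 1 := ⟨n - 1, (Nat.succ_pred_eq_of_pos hn).symm⟩
  have hα' : ∀ i : ℕ, α + 1 + (i:ℝ) ≠ 0 := fun i h => hα i (by linarith)
  have hα1 : α + 1 ≠ 0 := by have := hα' 0; simpa using this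
  have hα2 : ∀ i : ℕ, α + 1 + 1 + (i:ℝ) ≠ 0 := fun i h => by
    have := hα' (i+1); push_cast at this; exact this (by linarith)
  simp only [Nat.add_sub_cancel]
  simp only [dualHahn, eval_mul, eval_C, Polynomial.eval_finset_sum, Polynomial.eval_prod,
    eval_sub, eval_X]
  rw [← mul_sub, ← Finset.sum_sub_distrib, Finset.sum_range_succ']
  simp only [Finset.range_zero, Finset.prod_empty, sub_self, mul_zero, add_zero]
  rw [Finset.mul_sum, Finset.mul_sum, Finset.mul_sum]
  refine Finset.sum_congr rfl fun j hj => ?_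
  rw [← mul_sub, prod_diff α β x j]
  rw [show ((m:ℕ)+1) - (j+1) = m - j from by omega]
  rw [show (-((m:ℕ)+1:ℕ) : ℝ) = -((m:ℝ)+1) from by push_cast; ring]
  rw [show poch (-((m:ℝ)+1)) (j+1) = (-((m:ℝ)+1)) * poch (-(m:ℝ)) j from by
    rw [poch_succ_left]; congr 1; ring_nf]
  rw [show poch (-N + ((j+1:ℕ):ℝ)) (m-j) = poch (-(N-1) + (j:ℝ)) (m-j) from by
    congr 1; push_cast; ring]
  rw [poch_succ_left (α+1) j]
  have hfj : ((j+1).factorial : ℝ) = ((j:ℝ)+1) * (j.factorial : ℝ) := by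
    rw [Nat.factorial_succ]; push_cast; ring
  have hfm : (((m+1)).factorial : ℝ) = ((m:ℝ)+1) * (m.factorial : ℝ) := by
    rw [Nat.factorial_succ]; push_cast; ring
  rw [hfj, hfm, pow_succ]
  have hp1 : poch (α+1+1) j ≠ 0 := poch_ne_zero hα2 j
  have hfj0 : (j.factorial : ℝ) ≠ 0 := Nat.cast_ne_zero.mpr j.factorial_ne_zero
  have hfm0 : (m.factorial : ℝ) ≠ 0 := Nat.cast_ne_zero.mpr m.factorial_ne_zero
  have hj1 : ((j:ℝ)+1) ≠ 0 := by positivity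
  have hm1 : ((m:ℝ)+1) ≠ 0 := by positivity
  field_simp

end
end
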